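/- arXiv:1207.1257 — 4 statements merged into one kernel-verified Lean document; each statement's English description precedes it below -/
import Mathlib

section
/- If M ⊆ λ(Φ) is an irreducible hitting set of the collection LMES(Φ) of all LMESes of Φ, then M is a co-LMNS of Φ, i.e., λ(Φ) ∖ M is an LMNS of Φ. (Assume λ(Φ) ≠ ∅, and if Φ has unlabelled clauses then at least one label of Φ is irredundant.) -/
namespace LCNFStmt

/-- A clause is a finite set of literals (variable, polarity). -/
abbrev Clause (V : Type) := Finset (V × Bool)

def ClauseSat {V : Type} (τ : V → Bool) (c : Clause V) : Prop :=
  ∃ p ∈ c, τ p.1 = p.2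

/-- τ is a model of a CNF formula (finite set of clauses). -/
def Sat {V : Type} (τ : V → Bool) (F : Finset (Clause V)) : Prop :=
  ∀ c ∈ F, ClauseSat τ c

/-- Logical equivalence of CNF formulas: same models. -/
def Equiv {V : Type} (F₁ F₂ : Finset (Clause V)) : Prop :=
  ∀ τ, Sat τ F₁ ↔ Sat τ F₂

/-- F₁ implies F₂: every model of F₁ is a model of F₂. -/
def Implies {V : Type} (F₁ F₂ : Finset (Clause V)) : Prop :=
  ∀ τ, Sat τ F₁ → Sat τ F₂

/-- A labelled CNF formula: a CNF formula together with a labelling function. -/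
structure LCNF (V L : Type) where
  F : Finset (Clause V)
  lab : Clause V → Finset L

variable {V L : Type} [DecidableEq V] [DecidableEq L]

/-- The set of active labels λ(Φ). -/
def LCNF.active (Φ : LCNF V L) : Finset L := Φ.F.biUnion Φ.lab

/-- Clause set of the induced subformula Φ|_S : clauses all of whose labels lie in S. -/
def LCNF.restrict (Φ : LCNF V L) (S : Finset L) : Finset (Clause V) :=
  Φ.F.filter (fun c => Φ.lab c ⊆ S)

/-- Φ|_S ≡ Φ. -/
def LCNF.EquivTo (Φ : LCNF V L) (S : Finset L) : Prop :=
  Equiv (Φ.restrict S) Φ.F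

/-- A label is redundant in Φ if removing it keeps the formula equivalent. -/
def LCNF.Redundant (Φ : LCNF V L) (l : L) : Prop :=
  Φ.EquivTo (Φ.active.erase l)

/-- Labelled minimal equivalent subset. -/
def LCNF.LMES (Φ : LCNF V L) (S : Finset L) : Prop :=
  S ⊆ Φ.active ∧ Φ.EquivTo S ∧ ∀ S' ⊂ S, ¬ Φ.EquivTo S'

/-- Labelled maximal non-equivalent subset. -/
def LCNF.LMNS (Φ : LCNF V L) (S : Finset L) : Prop :=
  S ⊆ Φ.active ∧ ¬ Φ.EquivTo S ∧ ∀ S', S ⊂ S' → S' ⊆ Φ.active → Φ.EquivTo S'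

/-- Labelled maximal satisfiable subset. -/
def LCNF.LMSS (Φ : LCNF V L) (S : Finset L) : Prop :=
  S ⊆ Φ.active ∧ (∃ τ, Sat τ (Φ.restrict S)) ∧
    ∀ S', S ⊂ S' → S' ⊆ Φ.active → ¬ ∃ τ, Sat τ (Φ.restrict S')

/-- Hitting set of a collection of finite sets. -/
def HittingSet {α : Type} [DecidableEq α] (𝒮 : Set (Finset α)) (H : Finset α) : Prop :=
  ∀ A ∈ 𝒮, (H ∩ A).Nonempty

/-- Irreducible hitting set. -/
def IrredHittingSet {α : Type} [DecidableEq α] (𝒮 : Set (Finset α)) (H : Finset α) : Prop :=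
  HittingSet 𝒮 H ∧ ∀ H' ⊂ H, ¬ HittingSet 𝒮 H'


lemma equivTo_mono {V L : Type} [DecidableEq V] [DecidableEq L]
    (Φ : LCNF V L) {S S' : Finset L} (hss : S ⊆ S') (h : Φ.EquivTo S) :
    Φ.EquivTo S' := by
  intro τ
  constructor
  · intro hs
    have hsat : Sat τ (Φ.restrict S) := by
      intro c hc
      apply hs
      simp only [LCNF.restrict, Finset.mem_filter] at hc ⊢
      exact ⟨hc.1, hc.2.trans hss⟩
    exact (h τ).mp hsat
  · intro hF c hc
    simp only [LCNF.restrict, Finset.mem_filter] at hc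
    exact hF c hc.1

lemma exists_lmes_subset {V L : Type} [DecidableEq V] [DecidableEq L]
    (Φ : LCNF V L) {S : Finset L} (hS : S ⊆ Φ.active) (h : Φ.EquivTo S) :
    ∃ E ⊆ S, Φ.LMES E := by
  classical
  let 𝒯 := S.powerset.filter (fun T => Φ.EquivTo T)
  have hmem : S ∈ 𝒯 := by simp [𝒯, h]
  obtain ⟨T, hT, hmin⟩ := Finset.exists_min_image 𝒯 Finset.card ⟨S, hmem⟩
  simp only [𝒯, Finset.mem_filter, Finset.mem_powerset] at hT
  refine ⟨T, hT.1, hT.1.trans hS, hT.2, ?_⟩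
  intro S' hS' hE'
  have hmemS' : S' ∈ 𝒯 := by
    simp only [𝒯, Finset.mem_filter, Finset.mem_powerset]
    exact ⟨hS'.subset.trans hT.1, hE'⟩
  have := hmin S' hmemS'
  exact absurd this (by simpa using Finset.card_lt_card hS')

theorem irred_hs_of_lmes_is_colmns {V L : Type} [DecidableEq V] [DecidableEq L]
    (Φ : LCNF V L) (hne : Φ.active.Nonempty)
    (hunlab : (∃ c ∈ Φ.F, Φ.lab c = ∅) → ∃ l ∈ Φ.active, ¬ Φ.Redundant l)
    (M : Finset L) (hM : M ⊆ Φ.active)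
    (hhs : IrredHittingSet {S | Φ.LMES S} M) :
    Φ.LMNS (Φ.active \ M) := by
  classical
  refine ⟨Finset.sdiff_subset, ?_, ?_⟩
  · intro heq
    obtain ⟨E, hES, hE⟩ := exists_lmes_subset Φ Finset.sdiff_subset heq
    obtain ⟨x, hx⟩ := hhs.1 E hE
    rw [Finset.mem_inter] at hx
    exact (Finset.mem_sdiff.mp (hES hx.2)).2 hx.1
  · intro S' hsub hS'A
    obtain ⟨l, hlS', hlnot⟩ := Finset.exists_of_ssubset hsub
    have hlM : l ∈ M := by
      have := hS'A hlS'
      by_contra h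
      exact hlnot (Finset.mem_sdiff.mpr ⟨this, h⟩)
    have herase : M.erase l ⊂ M := Finset.erase_ssubset hlM
    have hnh := hhs.2 _ herase
    simp only [HittingSet, not_forall] at hnh
    obtain ⟨E, hE, hempty⟩ := hnh
    have hE : Φ.LMES E := hE
    obtain ⟨x, hx⟩ := hhs.1 E hE
    rw [Finset.mem_inter] at hx
    have hxl : x = l := by
      by_contra hne'
      exact hempty ⟨x, Finset.mem_inter.mpr ⟨Finset.mem_erase.mpr ⟨hne', hx.1⟩, hx.2⟩⟩
    have hEsub : E ⊆ S' := by
      intro y hy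
      by_cases hyM : y ∈ M
      · have : y = l := by
          by_contra hne'
          exact hempty ⟨y, Finset.mem_inter.mpr ⟨Finset.mem_erase.mpr ⟨hne', hyM⟩, hy⟩⟩
        exact this ▸ hlS'
      · exact hsub.subset (Finset.mem_sdiff.mpr ⟨hE.1 hy, hyM⟩)
    exact equivTo_mono Φ hEsub hE.2.1

end LCNFStmt
end

section
/- If U is an LMES of Φ, then U is an irreducible hitting set of coLMNS(Φ). -/
namespace LCNFStmt

variable {V L : Type} [DecidableEq V] [DecidableEq L]

theorem lmes_is_irred_hs_of_colmns {V L : Type} [DecidableEq V] [DecidableEq L]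
    (Φ : LCNF V L) (hne : Φ.active.Nonempty)
    (hunlab : (∃ c ∈ Φ.F, Φ.lab c = ∅) → ∃ l ∈ Φ.active, ¬ Φ.Redundant l)
    (U : Finset L) (hlmes : Φ.LMES U) :
    IrredHittingSet {M | M ⊆ Φ.active ∧ Φ.LMNS (Φ.active \ M)} U := by
  obtain ⟨hUsub, hUeq, hUmin⟩ := hlmes
  constructor
  · -- U hits every coLMNS element
    intro M hM
    obtain ⟨hMsub, hS1, hS2, hS3⟩ := hM
    by_contra h
    rw [Finset.not_nonempty_iff_eq_empty] at h
    have hU : U ⊆ Φ.active \ M := by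
      intro x hx
      refine Finset.mem_sdiff.mpr ⟨hUsub hx, fun hxM => ?_⟩
      have : x ∈ U ∩ M := Finset.mem_inter.mpr ⟨hx, hxM⟩
      simp [h] at this
    apply hS2
    intro τ
    constructor
    · intro hsat
      apply (hUeq τ).mp
      intro c hc
      apply hsat c
      simp only [LCNF.restrict, Finset.mem_filter] at hc ⊢
      exact ⟨hc.1, hc.2.trans hU⟩
    · intro hsat c hc
      exact hsat c (Finset.mem_filter.mp hc).1
  · -- irreducibility
    intro H' hH' hhit
    have hnotEq : ¬ Φ.EquivTo H' := hUmin H' hH'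
    have hH'act : H' ⊆ Φ.active := hH'.subset.trans hUsub
    set T : Set (Finset L) := {S | H' ⊆ S ∧ S ⊆ Φ.active ∧ ¬ Φ.EquivTo S} with hT
    have hTfin : T.Finite := by
      apply Set.Finite.subset (Finset.finite_toSet Φ.active.powerset)
      intro S hS
      simp only [Finset.coe_powerset, Set.mem_preimage, Set.mem_powerset_iff,
        Finset.coe_subset]
      exact hS.2.1
    have hTne : T.Nonempty := ⟨H', ⟨subset_rfl, hH'act, hnotEq⟩⟩
    obtain ⟨S, hST, hSmax⟩ := Set.Finite.exists_maximalFor Finset.card T hTfin hTne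
    obtain ⟨hH'S, hSact, hSne⟩ := hST
    have hlmns : Φ.LMNS S := by
      refine ⟨hSact, hSne, fun S'' hSS'' hS''act => ?_⟩
      by_contra hS''
      have hmem : S'' ∈ T := ⟨hH'S.trans hSS''.subset, hS''act, hS''⟩
      have := hSmax (j := S'') hmem (Finset.card_le_card hSS''.subset)
      exact absurd this (Nat.not_le.mpr (Finset.card_lt_card hSS''))
    obtain ⟨x, hx⟩ := hhit (Φ.active \ S)
      ⟨Finset.sdiff_subset, by
        rw [Finset.sdiff_sdiff_eq_self hSact]
        exact hlmns⟩
    rw [Finset.mem_inter, Finset.mem_sdiff] at hx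
    exact hx.2.2 (hH'S hx.1)

end LCNFStmt
end

section
/- For a labelled CNF formula Φ satisfying the hypotheses of the duality theorem (λ(Φ) ≠ ∅, and if Φ has unlabelled clauses then at least one label is irredundant): ⋃ LMES(Φ) = λ(Φ) ∖ ⋂ LMNS(Φ). -/
namespace LCNFStmt

variable {V L : Type} [DecidableEq V] [DecidableEq L]

lemma aux_sat_restrict {V L : Type} [DecidableEq V] [DecidableEq L] {Φ : LCNF V L}
    {S : Finset L} {τ : V → Bool} (h : Sat τ Φ.F) : Sat τ (Φ.restrict S) :=
  fun c hc => h c (Finset.mem_filter.mp hc).1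

lemma aux_equivTo_mono {V L : Type} [DecidableEq V] [DecidableEq L] {Φ : LCNF V L}
    {S S' : Finset L} (hss : S ⊆ S') (h : Φ.EquivTo S) : Φ.EquivTo S' := by
  intro τ
  constructor
  · intro hτ
    refine (h τ).mp (fun c hc => hτ c ?_)
    simp only [LCNF.restrict, Finset.mem_filter] at hc ⊢
    exact ⟨hc.1, hc.2.trans hss⟩
  · intro hτ
    exact aux_sat_restrict hτ

theorem union_lmes_eq_active_diff_inter_lmns {V L : Type} [DecidableEq V] [DecidableEq L]
    (Φ : LCNF V L) (hne : Φ.active.Nonempty)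
    (hunlab : (∃ c ∈ Φ.F, Φ.lab c = ∅) → ∃ l ∈ Φ.active, ¬ Φ.Redundant l) :
    { l : L | ∃ S : Finset L, Φ.LMES S ∧ l ∈ S } =
      { l : L | l ∈ Φ.active ∧ ∃ S : Finset L, Φ.LMNS S ∧ l ∉ S } := by
  classical
  ext l
  simp only [Set.mem_setOf_eq]
  constructor
  · rintro ⟨S, ⟨hSsub, hSeq, hSmin⟩, hlS⟩
    refine ⟨hSsub hlS, ?_⟩
    set A := Φ.active.erase l with hA
    set fam : Finset (Finset L) :=
      A.powerset.filter (fun T => S.erase l ⊆ T ∧ ¬ Φ.EquivTo T) with hfam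
    have hbase : S.erase l ∈ fam := by
      simp only [hfam, Finset.mem_filter, Finset.mem_powerset]
      refine ⟨?_, Finset.Subset.refl _, hSmin _ (Finset.erase_ssubset hlS)⟩
      intro x hx
      rcases Finset.mem_erase.mp hx with ⟨hx1, hx2⟩
      exact Finset.mem_erase.mpr ⟨hx1, hSsub hx2⟩
    obtain ⟨T, hTmem, hTmax⟩ : ∃ T ∈ fam, ∀ x ∈ fam, ¬ T < x := by
      obtain ⟨T, hT⟩ := Finset.exists_maximal (s := fam) ⟨_, hbase⟩
      exact ⟨T, hT.1, fun x hx hlt => lt_irrefl _ (lt_of_lt_of_le hlt (hT.2 hx hlt.le))⟩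
    simp only [hfam, Finset.mem_filter, Finset.mem_powerset] at hTmem
    obtain ⟨hTA, hTS, hTne⟩ := hTmem
    have hlT : l ∉ T := fun h => (Finset.mem_erase.mp (hTA h)).1 rfl
    refine ⟨T, ⟨hTA.trans (Finset.erase_subset _ _), hTne, ?_⟩, hlT⟩
    intro T' hTT' hT'act
    by_cases hlT' : l ∈ T'
    · refine aux_equivTo_mono (S' := T') ?_ hSeq
      intro x hx
      by_cases hxl : x = l
      · exact hxl ▸ hlT'
      · exact hTT'.1 (hTS (Finset.mem_erase.mpr ⟨hxl, hx⟩))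
    · by_contra hne'
      refine hTmax T' ?_ hTT'
      simp only [hfam, Finset.mem_filter, Finset.mem_powerset]
      exact ⟨fun x hx => Finset.mem_erase.mpr ⟨fun h => hlT' (h ▸ hx), hT'act hx⟩,
        hTS.trans hTT'.1, hne'⟩
  · rintro ⟨hl, S₀, ⟨hS₀sub, hS₀ne, hS₀max⟩, hlS₀⟩
    have hins : insert l S₀ ⊆ Φ.active := Finset.insert_subset hl hS₀sub
    have heq : Φ.EquivTo (insert l S₀) :=
      hS₀max _ (Finset.ssubset_insert hlS₀) hins
    set fam : Finset (Finset L) :=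
      (insert l S₀).powerset.filter (fun T => Φ.EquivTo T) with hfam
    have hbase : insert l S₀ ∈ fam := by
      simp only [hfam, Finset.mem_filter, Finset.mem_powerset]
      exact ⟨Finset.Subset.refl _, heq⟩
    obtain ⟨T, hTmem, hTmin⟩ : ∃ T ∈ fam, ∀ x ∈ fam, ¬ x < T := by
      obtain ⟨T, hT⟩ := Finset.exists_minimal (s := fam) ⟨_, hbase⟩
      exact ⟨T, hT.1, fun x hx hlt => lt_irrefl _ (lt_of_le_of_lt (hT.2 hx hlt.le) hlt)⟩
    simp only [hfam, Finset.mem_filter, Finset.mem_powerset] at hTmem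
    obtain ⟨hTsub, hTeq⟩ := hTmem
    have hlT : l ∈ T := by
      by_contra hlT
      refine hS₀ne (aux_equivTo_mono (S' := S₀) ?_ hTeq)
      intro x hx
      rcases Finset.mem_insert.mp (hTsub hx) with h | h
      · exact absurd (h ▸ hx) hlT
      · exact h
    refine ⟨T, ⟨hTsub.trans hins, hTeq, ?_⟩, hlT⟩
    intro S' hS'T hS'eq
    refine hTmin S' ?_ hS'T
    simp only [hfam, Finset.mem_filter, Finset.mem_powerset]
    exact ⟨hS'T.1.trans hTsub, hS'eq⟩

end LCNFStmt
end

section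
/- For any subformula Φ' = Φ|_{L'} of a labelled CNF formula Φ satisfying the hypotheses (λ(Φ) ≠ ∅ and at least one label irredundant if unlabelled clauses exist), Φ' ≢ Φ if and only if L' is a subset of some LMNS of Φ. -/
namespace LCNFStmt

variable {V L : Type} [DecidableEq V] [DecidableEq L]

theorem nonequiv_iff_subset_lmns {V L : Type} [DecidableEq V] [DecidableEq L]
    (Φ : LCNF V L) (hne : Φ.active.Nonempty)
    (hunlab : (∃ c ∈ Φ.F, Φ.lab c = ∅) → ∃ l ∈ Φ.active, ¬ Φ.Redundant l)
    (Lset : Finset L) (h : Lset ⊆ Φ.active) :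
    ¬ Φ.EquivTo Lset ↔ ∃ S : Finset L, Φ.LMNS S ∧ Lset ⊆ S := by
  classical
  have satMono : ∀ (τ : V → Bool) (F₁ F₂ : Finset (Clause V)), F₁ ⊆ F₂ →
      Sat τ F₂ → Sat τ F₁ := fun τ F₁ F₂ hsub hs c hc => hs c (hsub hc)
  have resMono : ∀ S₁ S₂ : Finset L, S₁ ⊆ S₂ → Φ.restrict S₁ ⊆ Φ.restrict S₂ := by
    intro S₁ S₂ hs c hc
    simp only [LCNF.restrict, Finset.mem_filter] at hc ⊢
    exact ⟨hc.1, hc.2.trans hs⟩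
  have antitone : ∀ S₁ S₂ : Finset L, S₁ ⊆ S₂ → S₂ ⊆ Φ.active →
      Φ.EquivTo S₁ → Φ.EquivTo S₂ := by
    intro S₁ S₂ hs _ he τ
    constructor
    · intro hsat
      exact (he τ).mp (satMono τ _ _ (resMono _ _ hs) hsat)
    · intro hsat
      exact satMono τ _ _ (Finset.filter_subset _ _) hsat
  constructor
  · intro hneq
    -- take a maximal-cardinality non-equivalent superset of Lset inside active
    set cand : Finset (Finset L) :=
      Φ.active.powerset.filter (fun S => Lset ⊆ S ∧ ¬ Φ.EquivTo S) with hcand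
    have hLmem : Lset ∈ cand := by
      simp [hcand, Finset.mem_powerset, h, hneq]
    obtain ⟨S, hSmem, hSmax⟩ := Finset.exists_max_image cand Finset.card ⟨_, hLmem⟩
    simp only [hcand, Finset.mem_filter, Finset.mem_powerset] at hSmem
    obtain ⟨hSact, hLS, hSneq⟩ := hSmem
    refine ⟨S, ⟨hSact, hSneq, ?_⟩, hLS⟩
    intro S' hss hS'act
    by_contra hne'
    have hmem' : S' ∈ cand := by
      simp [hcand, Finset.mem_powerset, hS'act, hLS.trans hss.subset, hne']
    have := hSmax S' hmem'
    exact absurd (Finset.card_lt_card hss) (not_lt.mpr this)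
  · rintro ⟨S, ⟨hSact, hSneq, _⟩, hLS⟩ heq
    exact hSneq (antitone Lset S hLS hSact heq)

end LCNFStmt
end
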